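/- arXiv:math/0106239 — 4 statements merged into one kernel-verified Lean document; each statement's English description precedes it below -/
import Mathlib

section
/- Let k be a field, A := k[w,x,z][[y]] and B := k[w,x,1/x,z][[y]], with φ : A → B the coefficientwise localization map. Then there exists a prime ideal p of B with p ≠ (0) whose contraction φ⁻¹(p) along φ is the zero ideal of A. -/
/-- `A = k[w,x,z][[y]]`: power series in `y` over the polynomial ring `k[w,x,z]`. -/
abbrev A (k : Type*) [Field k] : Type _ := PowerSeries (MvPolynomial (Fin 3) k)

/-- `B = k[w,x,1/x,z][[y]]`: power series in `y` over the localization of `k[w,x,z]`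
away from `x`. -/
abbrev B (k : Type*) [Field k] : Type _ :=
  PowerSeries (Localization.Away (MvPolynomial.X 1 : MvPolynomial (Fin 3) k))

/-- The coefficientwise localization map `φ : A → B`. -/
noncomputable def φ (k : Type*) [Field k] : A k →+* B k :=
  PowerSeries.map (algebraMap (MvPolynomial (Fin 3) k)
    (Localization.Away (MvPolynomial.X 1 : MvPolynomial (Fin 3) k)))


open PowerSeries Finset

section Ext
variable {R S : Type*} [CommRing R] [CommRing S]

private lemma quadswap {M : Type*} [AddCommMonoid M] (N : ℕ) (G : ℕ → ℕ → ℕ → ℕ → M) :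
    ∑ p ∈ Finset.HasAntidiagonal.antidiagonal N, ∑ ij ∈ Finset.HasAntidiagonal.antidiagonal p.1, ∑ uv ∈ Finset.HasAntidiagonal.antidiagonal p.2,
       G ij.1 ij.2 uv.1 uv.2
    = ∑ P ∈ Finset.HasAntidiagonal.antidiagonal N, ∑ iu ∈ Finset.HasAntidiagonal.antidiagonal P.1, ∑ jv ∈ Finset.HasAntidiagonal.antidiagonal P.2,
       G iu.1 jv.1 iu.2 jv.2 := by
  rw [Finset.sum_sigma', Finset.sum_sigma', Finset.sum_sigma', Finset.sum_sigma']
  refine Finset.sum_nbij'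
    (fun y => ⟨⟨(y.1.2.1 + y.2.1, y.1.2.2 + y.2.2), (y.1.2.1, y.2.1)⟩, (y.1.2.2, y.2.2)⟩)
    (fun y => ⟨⟨(y.1.2.1 + y.2.1, y.1.2.2 + y.2.2), (y.1.2.1, y.2.1)⟩, (y.1.2.2, y.2.2)⟩)
    ?_ ?_ ?_ ?_ ?_
  · rintro ⟨⟨⟨p, q⟩, ⟨i, j⟩⟩, ⟨u, v⟩⟩ hm
    simp only [Finset.mem_sigma, Finset.HasAntidiagonal.mem_antidiagonal, and_true, true_and] at hm ⊢
    omega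
  · rintro ⟨⟨⟨P, Q⟩, ⟨i, u⟩⟩, ⟨j, v⟩⟩ hm
    simp only [Finset.mem_sigma, Finset.HasAntidiagonal.mem_antidiagonal, and_true, true_and] at hm ⊢
    omega
  · rintro ⟨⟨⟨p, q⟩, ⟨i, j⟩⟩, ⟨u, v⟩⟩ hm
    simp only [Finset.mem_sigma, Finset.HasAntidiagonal.mem_antidiagonal] at hm
    obtain ⟨⟨-, rfl⟩, rfl⟩ := hm
    rfl
  · rintro ⟨⟨⟨P, Q⟩, ⟨i, u⟩⟩, ⟨j, v⟩⟩ hm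
    simp only [Finset.mem_sigma, Finset.HasAntidiagonal.mem_antidiagonal] at hm
    obtain ⟨⟨-, rfl⟩, rfl⟩ := hm
    rfl
  · rintro ⟨⟨⟨p, q⟩, ⟨i, j⟩⟩, ⟨u, v⟩⟩ hm
    rfl

/-- Coefficientwise application of `e : R →+* S⟦X⟧` followed by the substitution `X ↦ X`. -/
noncomputable def extFun (e : R →+* PowerSeries S) (f : PowerSeries R) : PowerSeries S :=
  PowerSeries.mk fun N => ∑ p ∈ Finset.HasAntidiagonal.antidiagonal N,
    PowerSeries.coeff (R := S) p.2 (e (PowerSeries.coeff (R := R) p.1 f))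

lemma coeff_extFun (e : R →+* PowerSeries S) (f : PowerSeries R) (N : ℕ) :
    PowerSeries.coeff (R := S) N (extFun e f) = ∑ p ∈ Finset.HasAntidiagonal.antidiagonal N,
      PowerSeries.coeff (R := S) p.2 (e (PowerSeries.coeff (R := R) p.1 f)) := by
  simp [extFun]

lemma extFun_add (e : R →+* PowerSeries S) (f g : PowerSeries R) :
    extFun e (f + g) = extFun e f + extFun e g := by
  ext N
  simp [coeff_extFun, Finset.sum_add_distrib]

lemma extFun_one (e : R →+* PowerSeries S) : extFun e 1 = 1 := by
  ext N
  rw [coeff_extFun]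
  rw [Finset.sum_eq_single (0, N)]
  · simp
  · rintro ⟨p, q⟩ hmem hne
    have h1 := Finset.HasAntidiagonal.mem_antidiagonal.mp hmem
    have hp : p ≠ 0 := by
      rintro rfl
      simp only [Nat.zero_add] at h1
      exact hne (by rw [h1])
    simp [PowerSeries.coeff_one, hp]
  · intro h
    exact absurd (Finset.HasAntidiagonal.mem_antidiagonal.mpr (by simp)) h

lemma extFun_mul (e : R →+* PowerSeries S) (f g : PowerSeries R) :
    extFun e (f * g) = extFun e f * extFun e g := by
  ext N
  rw [coeff_extFun, PowerSeries.coeff_mul]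
  have lhs : ∑ p ∈ Finset.HasAntidiagonal.antidiagonal N,
      PowerSeries.coeff (R := S) p.2 (e (PowerSeries.coeff (R := R) p.1 (f * g)))
      = ∑ p ∈ Finset.HasAntidiagonal.antidiagonal N, ∑ ij ∈ Finset.HasAntidiagonal.antidiagonal p.1,
          ∑ uv ∈ Finset.HasAntidiagonal.antidiagonal p.2,
          PowerSeries.coeff (R := S) uv.1 (e (PowerSeries.coeff (R := R) ij.1 f))
            * PowerSeries.coeff (R := S) uv.2 (e (PowerSeries.coeff (R := R) ij.2 g)) := by
    refine Finset.sum_congr rfl ?_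
    rintro ⟨p, q⟩ -
    rw [PowerSeries.coeff_mul, map_sum, map_sum]
    refine Finset.sum_congr rfl ?_
    rintro ⟨i, j⟩ -
    rw [map_mul, PowerSeries.coeff_mul]
  rw [lhs]
  have rhs : ∑ P ∈ Finset.HasAntidiagonal.antidiagonal N,
      PowerSeries.coeff (R := S) P.1 (extFun e f) * PowerSeries.coeff (R := S) P.2 (extFun e g)
      = ∑ P ∈ Finset.HasAntidiagonal.antidiagonal N, ∑ iu ∈ Finset.HasAntidiagonal.antidiagonal P.1,
          ∑ jv ∈ Finset.HasAntidiagonal.antidiagonal P.2,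
          PowerSeries.coeff (R := S) iu.2 (e (PowerSeries.coeff (R := R) iu.1 f))
            * PowerSeries.coeff (R := S) jv.2 (e (PowerSeries.coeff (R := R) jv.1 g)) := by
    refine Finset.sum_congr rfl ?_
    rintro ⟨P, Q⟩ -
    rw [coeff_extFun, coeff_extFun, Finset.sum_mul_sum]
  rw [rhs]
  exact quadswap N (fun i j u v =>
    PowerSeries.coeff (R := S) u (e (PowerSeries.coeff (R := R) i f))
      * PowerSeries.coeff (R := S) v (e (PowerSeries.coeff (R := R) j g)))

/-- The ring hom `R⟦X⟧ →+* S⟦X⟧` obtained by applying `e` to coefficients and substituting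
`X ↦ X`. -/
noncomputable def extHom (e : R →+* PowerSeries S) : PowerSeries R →+* PowerSeries S where
  toFun := extFun e
  map_one' := extFun_one e
  map_mul' := extFun_mul e
  map_zero' := by
    ext N
    simp [coeff_extFun]
  map_add' := extFun_add e

lemma coeff_extHom (e : R →+* PowerSeries S) (f : PowerSeries R) (N : ℕ) :
    PowerSeries.coeff (R := S) N (extHom e f) = ∑ p ∈ Finset.HasAntidiagonal.antidiagonal N,
      PowerSeries.coeff (R := S) p.2 (e (PowerSeries.coeff (R := R) p.1 f)) :=
  coeff_extFun e f N

lemma extHom_C (e : R →+* PowerSeries S) (r : R) :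
    extHom e (PowerSeries.C (R := R) r) = e r := by
  show extFun e _ = _
  ext N
  rw [coeff_extFun, Finset.sum_eq_single (0, N)]
  · simp
  · rintro ⟨p, q⟩ hmem hne
    have h1 := Finset.HasAntidiagonal.mem_antidiagonal.mp hmem
    have hp : p ≠ 0 := by
      rintro rfl
      simp only [Nat.zero_add] at h1
      exact hne (by rw [h1])
    simp [PowerSeries.coeff_C, hp]
  · intro h
    exact absurd (Finset.HasAntidiagonal.mem_antidiagonal.mpr (by simp)) h

/-- If every coefficient of `f` is mapped to a constant, then `extHom e` acts coefficientwise. -/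
lemma extHom_of_constant (e : R →+* PowerSeries S) (f : PowerSeries R) (c : ℕ → S)
    (h : ∀ n, e (PowerSeries.coeff (R := R) n f) = PowerSeries.C (R := S) (c n)) :
    extHom e f = PowerSeries.mk c := by
  show extFun e _ = _
  ext N
  rw [coeff_extFun, Finset.sum_eq_single (N, 0)]
  · simp [h]
  · rintro ⟨p, q⟩ hmem hne
    have h1 := Finset.HasAntidiagonal.mem_antidiagonal.mp hmem
    have hq : q ≠ 0 := by
      rintro rfl
      simp only [Nat.add_zero] at h1
      exact hne (by rw [h1])
    simp [h, PowerSeries.coeff_C, hq]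
  · intro h'
    exact absurd (Finset.HasAntidiagonal.mem_antidiagonal.mpr (by simp)) h'

end Ext
namespace Statement0Aux

open MvPolynomial PowerSeries

variable (k : Type*) [Field k]

abbrev R3 := MvPolynomial (Fin 3) k
abbrev CC := Localization.Away (MvPolynomial.X 1 : R3 k)

noncomputable def alg : R3 k →+* CC k := algebraMap _ _

lemma hle : Submonoid.powers (MvPolynomial.X 1 : R3 k) ≤ nonZeroDivisors (R3 k) :=
  powers_le_nonZeroDivisors_of_noZeroDivisors (MvPolynomial.X_ne_zero 1)

instance : IsDomain (CC k) := IsLocalization.isDomain_localization (hle k)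

lemma alg_inj : Function.Injective (alg k) :=
  IsLocalization.injective (CC k) (hle k)

/-- `a m = 2 ^ (m * m)`, the `y`-exponents of the special series `s`. -/
def aa (m : ℕ) : ℕ := 2 ^ (m * m)

/-- `c m = 2 ^ (m * m * m)`, the `1/x`-exponents of the special series `s`. -/
def cc (m : ℕ) : ℕ := 2 ^ (m * m * m)

lemma aa_pos (m : ℕ) : 0 < aa m := Nat.pow_pos (by norm_num)

lemma cc_pos (m : ℕ) : 0 < cc m := Nat.pow_pos (by norm_num)

lemma aa_strictMono : StrictMono aa := fun m n h => by
  have h2 : m ^ 2 < n ^ 2 := Nat.pow_lt_pow_left h (by norm_num)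
  exact Nat.pow_lt_pow_right (by norm_num) (by nlinarith)

lemma cc_strictMono : StrictMono cc := fun m n h => by
  have h3 : m ^ 3 < n ^ 3 := Nat.pow_lt_pow_left h (by norm_num)
  exact Nat.pow_lt_pow_right (by norm_num) (by nlinarith)

lemma aa_mono : Monotone aa := aa_strictMono.monotone

lemma cc_mono : Monotone cc := cc_strictMono.monotone

lemma lt_aa (m : ℕ) : m < aa m := by
  rcases Nat.eq_zero_or_pos m with rfl | hm
  · simp [aa]
  · exact lt_of_lt_of_le Nat.lt_two_pow_self
      (Nat.pow_le_pow_right (by norm_num) (Nat.le_mul_of_pos_left m hm))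

lemma one_le_aa (m : ℕ) : 1 ≤ aa m := aa_pos m

noncomputable def xb : CC k := alg k (MvPolynomial.X 1)
noncomputable def zb : CC k := alg k (MvPolynomial.X 2)
noncomputable def wb : CC k := alg k (MvPolynomial.X 0)

noncomputable def xinv : CC k := IsLocalization.Away.invSelf (S := CC k) (MvPolynomial.X 1 : R3 k)

lemma xb_mul_xinv : xb k * xinv k = 1 := IsLocalization.Away.mul_invSelf _

/-- The special power series `s = ∑_{m ≥ 1} x^{-c m} y^{a m}`. -/
noncomputable def SS : PowerSeries (CC k) :=
  PowerSeries.mk fun u => ∑ m ∈ Finset.range (u + 1),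
    if 1 ≤ m ∧ aa m = u then xinv k ^ cc m else 0

lemma coeff_SS (u : ℕ) : PowerSeries.coeff (R := CC k) u (SS k)
    = ∑ m ∈ Finset.range (u + 1), if 1 ≤ m ∧ aa m = u then xinv k ^ cc m else 0 := by
  simp [SS]

lemma coeff_SS_zero : PowerSeries.coeff (R := CC k) 0 (SS k) = 0 := by
  rw [coeff_SS]
  refine Finset.sum_eq_zero ?_
  intro m _
  rw [if_neg]
  rintro ⟨h1, h2⟩
  exact absurd h2 (by have := aa_pos m; omega)

end Statement0Aux
namespace Statement0Aux

open MvPolynomial PowerSeries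

variable (k : Type*) [Field k]

lemma coeff_SS_aa {m : ℕ} (hm : 1 ≤ m) :
    PowerSeries.coeff (R := CC k) (aa m) (SS k) = xinv k ^ cc m := by
  rw [coeff_SS, Finset.sum_eq_single m]
  · rw [if_pos ⟨hm, rfl⟩]
  · intro m' _ hne
    rw [if_neg]
    rintro ⟨h1, h2⟩
    exact hne (aa_strictMono.injective h2)
  · intro h
    exact absurd (Finset.mem_range.mpr (Nat.lt_succ_of_lt (lt_aa m))) h

/-- Evaluation `w ↦ s`, `x ↦ x`, `z ↦ z` on polynomials. -/
noncomputable def ev0 : R3 k →+* PowerSeries (CC k) :=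
  MvPolynomial.eval₂Hom ((PowerSeries.C (R := CC k)).comp ((alg k).comp MvPolynomial.C))
    ![SS k, PowerSeries.C (R := CC k) (xb k), PowerSeries.C (R := CC k) (zb k)]

lemma ev0_X0 : ev0 k (MvPolynomial.X 0) = SS k := by
  simp [ev0]

lemma ev0_X1 : ev0 k (MvPolynomial.X 1) = PowerSeries.C (R := CC k) (xb k) := by
  simp [ev0]

lemma ev0_X1_isUnit : IsUnit (ev0 k (MvPolynomial.X 1)) := by
  rw [ev0_X1]
  exact (IsLocalization.Away.algebraMap_isUnit (S := CC k) (MvPolynomial.X 1 : R3 k)).map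
    (PowerSeries.C (R := CC k))

/-- Extension of `ev0` to the localization. -/
noncomputable def evC : CC k →+* PowerSeries (CC k) :=
  IsLocalization.Away.lift (g := ev0 k) (MvPolynomial.X 1 : R3 k) (ev0_X1_isUnit k)

lemma evC_alg (p : R3 k) : evC k (alg k p) = ev0 k p :=
  IsLocalization.Away.lift_eq _ _ _

lemma evC_xinv : evC k (xinv k) = PowerSeries.C (R := CC k) (xinv k) := by
  have hc : PowerSeries.C (R := CC k) (xb k) = evC k (alg k (MvPolynomial.X 1)) := by
    rw [evC_alg, ev0_X1]
  have h1 : evC k (xinv k) * PowerSeries.C (R := CC k) (xb k) = 1 := by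
    rw [hc, ← map_mul]
    have hx : xinv k * alg k (MvPolynomial.X 1) = 1 := by
      rw [mul_comm]; exact xb_mul_xinv k
    rw [hx, map_one]
  have h2 : PowerSeries.C (R := CC k) (xinv k) * PowerSeries.C (R := CC k) (xb k) = 1 := by
    rw [← map_mul, mul_comm, xb_mul_xinv, map_one]
  calc evC k (xinv k) = evC k (xinv k) * (PowerSeries.C (R := CC k) (xinv k)
        * PowerSeries.C (R := CC k) (xb k)) := by rw [h2, mul_one]
    _ = PowerSeries.C (R := CC k) (xinv k) * (evC k (xinv k) * PowerSeries.C (R := CC k) (xb k)) := by ring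
    _ = PowerSeries.C (R := CC k) (xinv k) := by rw [h1, mul_one]

lemma evC_coeff_SS (n : ℕ) :
    evC k (PowerSeries.coeff (R := CC k) n (SS k))
      = PowerSeries.C (R := CC k) (PowerSeries.coeff (R := CC k) n (SS k)) := by
  rw [coeff_SS, map_sum, map_sum]
  refine Finset.sum_congr rfl ?_
  intro m _
  split_ifs with h
  · rw [map_pow, map_pow, evC_xinv]
  · rw [map_zero, map_zero]

/-- The substitution homomorphism `Φ : B → B`, `w ↦ s` coefficientwise, `y ↦ y`. -/
noncomputable def Phi : PowerSeries (CC k) →+* PowerSeries (CC k) := extHom (evC k)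

lemma Phi_SS : Phi k (SS k) = SS k := by
  rw [Phi, extHom_of_constant (evC k) (SS k) (fun n => PowerSeries.coeff (R := CC k) n (SS k))
    (evC_coeff_SS k)]
  ext n
  simp

noncomputable def wB : PowerSeries (CC k) := PowerSeries.C (R := CC k) (wb k)

lemma Phi_wB : Phi k (wB k) = SS k := by
  rw [Phi, wB, extHom_C, wb, evC_alg, ev0_X0]

lemma Phi_witness : Phi k (wB k - SS k) = 0 := by
  rw [map_sub, Phi_wB, Phi_SS, sub_self]

lemma witness_ne_zero : wB k - SS k ≠ 0 := by
  intro h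
  have h0 : PowerSeries.coeff (R := CC k) 0 (wB k - SS k) = 0 := by rw [h, map_zero]
  rw [map_sub, coeff_SS_zero, sub_zero, wB] at h0
  rw [PowerSeries.coeff_zero_eq_constantCoeff, PowerSeries.constantCoeff_C] at h0
  have h0' : alg k (MvPolynomial.X 0) = alg k 0 := by rw [map_zero]; exact h0
  exact MvPolynomial.X_ne_zero 0 (alg_inj k h0')

end Statement0Aux
namespace Statement0Aux

open MvPolynomial PowerSeries

variable (k : Type*) [Field k]

/-- Embedding of one-variable polynomials as polynomials in `x`. -/
noncomputable def iota : Polynomial k →+* R3 k :=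
  Polynomial.eval₂RingHom MvPolynomial.C (MvPolynomial.X 1)

lemma coeff_iota (P : Polynomial k) (σ : Fin 3 →₀ ℕ) :
    MvPolynomial.coeff σ (iota k P)
      = if σ 0 = 0 ∧ σ 2 = 0 then P.coeff (σ 1) else 0 := by
  have hexp : iota k P = ∑ γ ∈ P.support,
      MvPolynomial.monomial (Finsupp.single (1 : Fin 3) γ) (P.coeff γ) := by
    rw [iota, Polynomial.coe_eval₂RingHom, Polynomial.eval₂_eq_sum, Polynomial.sum]
    exact Finset.sum_congr rfl fun γ _ => MvPolynomial.C_mul_X_pow_eq_monomial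
  rw [hexp, MvPolynomial.coeff_sum]
  simp only [MvPolynomial.coeff_monomial]
  split_ifs with h
  · -- σ is supported on coordinate 1
    have hσ : σ = Finsupp.single (1 : Fin 3) (σ 1) := by
      ext i
      fin_cases i
      · simpa using h.1
      · simp
      · simpa using h.2
    rw [Finset.sum_eq_single (σ 1)]
    · rw [if_pos hσ.symm]
    · intro γ _ hne
      rw [if_neg]
      intro heq
      apply hne
      have := congrArg (fun f : Fin 3 →₀ ℕ => f 1) heq
      simpa using this
    · intro hnot
      rw [if_pos hσ.symm, Polynomial.notMem_support_iff.mp hnot]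
  · refine Finset.sum_eq_zero fun γ _ => ?_
    rw [if_neg]
    intro heq
    apply h
    constructor
    · have := congrArg (fun f : Fin 3 →₀ ℕ => f 0) heq
      simpa using this.symm
    · have := congrArg (fun f : Fin 3 →₀ ℕ => f 2) heq
      simpa using this.symm

/-- The cleared polynomial form of `x^(d * c r) * coeff_q (s^d)`. -/
noncomputable def GG (r : ℕ) : ℕ → ℕ → Polynomial k
  | 0, q => if q = 0 then 1 else 0
  | d + 1, q => ∑ uv ∈ Finset.HasAntidiagonal.antidiagonal q, ∑ m ∈ Finset.range (uv.1 + 1),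
      if 1 ≤ m ∧ aa m = uv.1 then GG r d uv.2 * Polynomial.X ^ (cc r - cc m) else 0

lemma GG_zero (r q : ℕ) : GG k r 0 q = if q = 0 then 1 else 0 := rfl

lemma GG_succ (r d q : ℕ) : GG k r (d + 1) q
    = ∑ uv ∈ Finset.HasAntidiagonal.antidiagonal q, ∑ m ∈ Finset.range (uv.1 + 1),
      if 1 ≤ m ∧ aa m = uv.1 then GG k r d uv.2 * Polynomial.X ^ (cc r - cc m) else 0 := rfl

/-- `s^e` has `y`-order at least `e`. -/
lemma coeff_SS_pow_eq_zero : ∀ e q : ℕ, q < e → PowerSeries.coeff (R := CC k) q (SS k ^ e) = 0 := by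
  intro e
  induction e with
  | zero => intro q hq; omega
  | succ e ih =>
    intro q hq
    rw [pow_succ', PowerSeries.coeff_mul]
    refine Finset.sum_eq_zero ?_
    rintro ⟨u, v⟩ hm
    have huv := Finset.HasAntidiagonal.mem_antidiagonal.mp hm
    rcases Nat.eq_zero_or_pos u with rfl | hu
    · rw [coeff_SS_zero, zero_mul]
    · rw [ih v (by omega), mul_zero]

lemma GG_eq_zero_of_lt (r : ℕ) : ∀ d q : ℕ, q < d → GG k r d q = 0 := by
  intro d
  induction d with
  | zero => intro q hq; omega
  | succ d ih =>
    intro q hq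
    rw [GG_succ]
    refine Finset.sum_eq_zero ?_
    rintro ⟨u, v⟩ hm
    have huv : u + v = q := Finset.HasAntidiagonal.mem_antidiagonal.mp hm
    refine Finset.sum_eq_zero ?_
    intro m _
    split_ifs with h
    · have h2 : aa m = u := h.2
      have hu : 1 ≤ u := by have := one_le_aa m; omega
      rw [ih v (by omega), zero_mul]
    · rfl

/-- Main identity: `x^(d * c r) * coeff_q (s^d)` is the image of the polynomial `GG r d q`. -/
lemma claim_eq (r : ℕ) : ∀ d q : ℕ, q < aa (r + 1) →
    xb k ^ (d * cc r) * PowerSeries.coeff (R := CC k) q (SS k ^ d)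
      = alg k (iota k (GG k r d q)) := by
  intro d
  induction d with
  | zero =>
    intro q _
    rw [GG_zero, pow_zero, PowerSeries.coeff_one, zero_mul, pow_zero, one_mul]
    split_ifs with h
    · rw [map_one, map_one]
    · rw [map_zero, map_zero]
  | succ d ih =>
    intro q hq
    rw [pow_succ', PowerSeries.coeff_mul, GG_succ, map_sum, map_sum, Finset.mul_sum]
    refine Finset.sum_congr rfl ?_
    rintro ⟨u, v⟩ hm
    have huv : u + v = q := Finset.HasAntidiagonal.mem_antidiagonal.mp hm
    rw [coeff_SS, map_sum, map_sum, Finset.sum_mul, Finset.mul_sum]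
    refine Finset.sum_congr rfl ?_
    intro m _
    split_ifs with h
    · -- the variable `m` is at most `r`
      have hau : aa m = u := h.2
      have hmr : m ≤ r := by
        have h1 : aa m < aa (r + 1) := by omega
        have := aa_strictMono.lt_iff_lt.mp h1
        omega
      have hccm : cc m ≤ cc r := cc_mono hmr
      -- split the power of x
      have hsplit : (d + 1) * cc r = (cc r - cc m) + cc m + d * cc r := by
        have h1 : (d + 1) * cc r = cc r + d * cc r := by ring
        omega
      rw [hsplit, pow_add, pow_add]
      have hxinv : xb k ^ cc m * xinv k ^ cc m = 1 := by
        rw [← mul_pow, xb_mul_xinv, one_pow]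
      have hih := ih v (by omega)
      calc xb k ^ (cc r - cc m) * xb k ^ cc m * xb k ^ (d * cc r)
            * (xinv k ^ cc m * PowerSeries.coeff (R := CC k) v (SS k ^ d))
          = (xb k ^ cc m * xinv k ^ cc m) * (xb k ^ (cc r - cc m)
              * (xb k ^ (d * cc r) * PowerSeries.coeff (R := CC k) v (SS k ^ d))) := by ring
        _ = xb k ^ (cc r - cc m) * alg k (iota k (GG k r d v)) := by
              rw [hxinv, one_mul, hih]
        _ = alg k (iota k (GG k r d v * Polynomial.X ^ (cc r - cc m))) := by
              rw [map_mul, map_pow, map_mul, map_pow]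
              have hX : alg k (iota k Polynomial.X) = xb k := by
                rw [iota, Polynomial.coe_eval₂RingHom, Polynomial.eval₂_X]; rfl
              rw [hX, mul_comm]
    · rw [zero_mul, mul_zero, map_zero, map_zero]

/-- Support description of `GG`. -/
lemma claim_support (r : ℕ) (hr : 1 ≤ r) : ∀ d q : ℕ, q < aa (r + 1) → ∀ γ : ℕ,
    (GG k r d q).coeff γ ≠ 0 →
    ∃ k' T : ℕ, k' ≤ d ∧ γ + k' * cc r + T = d * cc r ∧ T ≤ (d - k') * cc (r - 1)
      ∧ k' * aa r + (d - k') ≤ q := by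
  intro d
  induction d with
  | zero =>
    intro q _ γ hγ
    rw [GG_zero] at hγ
    by_cases hq : q = 0
    · rw [if_pos hq, Polynomial.coeff_one] at hγ
      have hγ0 : γ = 0 := by
        by_contra hc
        exact hγ (if_neg (by omega))
      subst hγ0
      subst hq
      exact ⟨0, 0, le_rfl, by simp, by simp, by simp⟩
    · rw [if_neg hq, Polynomial.coeff_zero] at hγ
      exact absurd rfl hγ
  | succ d ih =>
    intro q hq γ hγ
    rw [GG_succ, Polynomial.finset_sum_coeff] at hγ
    obtain ⟨⟨u, v⟩, hm, hne⟩ := Finset.exists_ne_zero_of_sum_ne_zero hγ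
    have huv : u + v = q := Finset.HasAntidiagonal.mem_antidiagonal.mp hm
    rw [Polynomial.finset_sum_coeff] at hne
    obtain ⟨m, _, hne2⟩ := Finset.exists_ne_zero_of_sum_ne_zero hne
    have hcond : 1 ≤ m ∧ aa m = u := by
      by_contra hc
      rw [if_neg hc, Polynomial.coeff_zero] at hne2
      exact hne2 rfl
    have hau : aa m = u := hcond.2
    rw [if_pos hcond, Polynomial.coeff_mul_X_pow'] at hne2
    have hle : cc r - cc m ≤ γ := by
      by_contra hc
      rw [if_neg hc] at hne2
      exact hne2 rfl
    rw [if_pos hle] at hne2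
    have hmr : m ≤ r := by
      have h1 : aa m < aa (r + 1) := by omega
      have := aa_strictMono.lt_iff_lt.mp h1
      omega
    have hccm : cc m ≤ cc r := cc_mono hmr
    obtain ⟨k', T, hk'd, heq, hT, hcount⟩ := ih v (by omega) _ hne2
    rcases eq_or_lt_of_le hmr with rfl | hmlt
    · -- m = r
      refine ⟨k' + 1, T, by omega, ?_, ?_, ?_⟩
      · have h1 : (k' + 1) * cc m = k' * cc m + cc m := by ring
        have h2 : (d + 1) * cc m = d * cc m + cc m := by ring
        omega
      · have h1 : d + 1 - (k' + 1) = d - k' := by omega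
        rw [h1]; exact hT
      · have h1 : (k' + 1) * aa m = k' * aa m + aa m := by ring
        have h2 : d + 1 - (k' + 1) = d - k' := by omega
        omega
    · -- m < r
      refine ⟨k', T + cc m, by omega, ?_, ?_, ?_⟩
      · have h2 : (d + 1) * cc r = d * cc r + cc r := by ring
        omega
      · have h1 : cc m ≤ cc (r - 1) := cc_mono (by omega)
        have h2 : (d + 1 - k') * cc (r - 1) = (d - k') * cc (r - 1) + cc (r - 1) := by
          have : d + 1 - k' = (d - k') + 1 := by omega
          rw [this]; ring
        omega
      · have h1 : 1 ≤ u := hcond.2 ▸ one_le_aa m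
        have h2 : d + 1 - k' = (d - k') + 1 := by omega
        omega

/-- The designated coefficient is 1. -/
lemma claim_designated (r : ℕ) (hr : 1 ≤ r) : ∀ d : ℕ, d * aa r < aa (r + 1) →
    (GG k r d (d * aa r)).coeff 0 = 1 := by
  intro d
  induction d with
  | zero => intro _; rw [zero_mul, GG_zero, if_pos rfl, Polynomial.coeff_one]; simp
  | succ d ih =>
    intro hd
    rw [GG_succ]
    rw [Polynomial.finset_sum_coeff, Finset.sum_eq_single (aa r, d * aa r)]
    · rw [Polynomial.finset_sum_coeff, Finset.sum_eq_single r]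
      · rw [if_pos ⟨hr, rfl⟩, Nat.sub_self, pow_zero, mul_one]
        exact ih (by nlinarith [aa_pos r])
      · intro m _ hmne
        split_ifs with h
        · exact absurd (aa_strictMono.injective h.2) hmne
        · rfl
      · intro hnot
        exact absurd (Finset.mem_range.mpr (Nat.lt_succ_of_lt (lt_aa r))) hnot
    · rintro ⟨u, v⟩ hm hne
      have huv : u + v = (d + 1) * aa r := Finset.HasAntidiagonal.mem_antidiagonal.mp hm
      rw [Polynomial.finset_sum_coeff]
      refine Finset.sum_eq_zero ?_
      intro m _
      split_ifs with h
      · have hau : aa m = u := h.2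
        have hmr : m ≤ r := by
          have h1 : aa m < aa (r + 1) := by omega
          have := aa_strictMono.lt_iff_lt.mp h1
          omega
        have hmR : m ≠ r := by
          rintro rfl
          apply hne
          have hu2 : u = aa m := hau.symm
          have hv2 : v = d * aa m := by
            have hmul : (d + 1) * aa m = aa m + d * aa m := by ring
            omega
          rw [hu2, hv2]
        have hmlt : m < r := by omega
        rw [Polynomial.coeff_mul_X_pow']
        rw [if_neg]
        have := cc_strictMono hmlt
        omega
      · rfl
    · intro hnot
      apply absurd _ hnot
      refine Finset.HasAntidiagonal.mem_antidiagonal.mpr ?_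
      ring

end Statement0Aux
namespace Statement0Aux

open MvPolynomial PowerSeries

variable (k : Type*) [Field k]

lemma growth1 (t d r : ℕ) (ht : t ≤ r) (hd : d ≤ r) (hr : 1 ≤ r) :
    t + d * aa r < aa (r + 1) := by
  have h1 : d * aa r ≤ r * aa r := Nat.mul_le_mul_right _ hd
  have h2 : r ≤ r * aa r := Nat.le_mul_of_pos_right r (aa_pos r)
  have h3 : t + d * aa r ≤ 2 * r * aa r := by
    have : 2 * r * aa r = r * aa r + r * aa r := by ring
    omega
  have h4 : 2 * r ≤ 2 ^ (r + 1) := by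
    have h5 : r < 2 ^ r := Nat.lt_two_pow_self
    have h6 : 2 ^ (r + 1) = 2 * 2 ^ r := by ring
    omega
  have h7 : 2 * r * aa r ≤ 2 ^ (r + 1) * aa r := Nat.mul_le_mul_right _ h4
  have h8 : 2 ^ (r + 1) * aa r = 2 ^ (r + 1 + r * r) := by
    rw [aa, ← pow_add]
  have h9 : r + 1 + r * r < (r + 1) * (r + 1) := by nlinarith
  have h10 : 2 ^ (r + 1 + r * r) < 2 ^ ((r + 1) * (r + 1)) :=
    Nat.pow_lt_pow_right (by norm_num) h9
  have h11 : aa (r + 1) = 2 ^ ((r + 1) * (r + 1)) := rfl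
  omega

lemma growth2 (t d α r : ℕ) (ht : t ≤ r) (hd : d ≤ r) (hα : α ≤ r) (hr : 3 ≤ r) :
    α + (t + d * aa r) * cc (r - 1) < cc r := by
  obtain ⟨m, rfl⟩ : ∃ m, r = m + 1 := ⟨r - 1, by omega⟩
  have hm : 2 ≤ m := by omega
  have hsimp : m + 1 - 1 = m := by omega
  rw [hsimp]
  -- abbreviations
  have hN : t + d * aa (m + 1) < 2 ^ ((m + 2) * (m + 2)) :=
    growth1 t d (m + 1) ht hd (by omega)
  have hαE : α < 2 ^ ((m + 2) * (m + 2)) := by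
    have := Nat.lt_two_pow_self (n := m + 1)
    have h2 : 2 ^ (m + 1) ≤ 2 ^ ((m + 2) * (m + 2)) :=
      Nat.pow_le_pow_right (by norm_num) (by nlinarith)
    omega
  have hkey : (m + 2) * (m + 2) + 1 + m * m * m < (m + 1) * ((m + 1) * (m + 1)) := by
    nlinarith
  have hccpos : 1 ≤ cc m := cc_pos m
  have hprod : (t + d * aa (m + 1)) * cc m < 2 ^ ((m + 2) * (m + 2)) * cc m :=
    Nat.mul_lt_mul_of_lt_of_le hN (le_refl _) (by positivity)
  have hE : 2 ^ ((m + 2) * (m + 2)) * (2 * cc m) = 2 ^ ((m + 2) * (m + 2) + 1 + m * m * m) := by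
    rw [cc]
    rw [pow_add, pow_add, pow_one]
    ring
  have hlt : 2 ^ ((m + 2) * (m + 2) + 1 + m * m * m) < 2 ^ ((m + 1) * ((m + 1) * (m + 1))) :=
    Nat.pow_lt_pow_right (by norm_num) hkey
  have hccr : cc (m + 1) = 2 ^ ((m + 1) * ((m + 1) * (m + 1))) := by
    rw [cc]
    ring_nf
  have hEsplit : 2 ^ ((m + 2) * (m + 2)) * (2 * cc m)
      = 2 ^ ((m + 2) * (m + 2)) * cc m + 2 ^ ((m + 2) * (m + 2)) * cc m := by ring
  have hEc : 2 ^ ((m + 2) * (m + 2)) ≤ 2 ^ ((m + 2) * (m + 2)) * cc m :=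
    Nat.le_mul_of_pos_right _ (cc_pos m)
  omega

lemma alg_C_comm (c0 : k) (y : CC k) :
    alg k (MvPolynomial.C c0) * y = y * alg k (MvPolynomial.C c0) := mul_comm _ _

lemma alg_monomial (ν : Fin 3 →₀ ℕ) (c0 : k) :
    alg k (MvPolynomial.monomial ν c0)
      = alg k (MvPolynomial.C c0) * (wb k ^ ν 0 * xb k ^ ν 1 * zb k ^ ν 2) := by
  rw [MvPolynomial.monomial_eq, map_mul]
  congr 1
  have hprod : (ν.prod fun n e => (MvPolynomial.X n : R3 k) ^ e)
      = MvPolynomial.X 0 ^ ν 0 * MvPolynomial.X 1 ^ ν 1 * MvPolynomial.X 2 ^ ν 2 := by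
    rw [Finsupp.prod_pow, Fin.prod_univ_three]
  rw [hprod, map_mul, map_mul, map_pow, map_pow, map_pow]
  rfl

lemma coeff_ev0 (P : R3 k) (q : ℕ) :
    PowerSeries.coeff (R := CC k) q (ev0 k P)
      = ∑ μ ∈ P.support, (alg k (MvPolynomial.C (MvPolynomial.coeff μ P))
          * xb k ^ μ 1 * zb k ^ μ 2) * PowerSeries.coeff (R := CC k) q (SS k ^ μ 0) := by
  rw [ev0, MvPolynomial.coe_eval₂Hom, MvPolynomial.eval₂_eq', map_sum]
  refine Finset.sum_congr rfl ?_
  intro μ _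
  rw [Fin.prod_univ_three]
  simp only [Matrix.cons_val_zero, Matrix.cons_val_one, Matrix.head_cons,
    Matrix.cons_val_two, Matrix.tail_cons]
  rw [RingHom.comp_apply, RingHom.comp_apply]
  rw [← map_pow (PowerSeries.C (R := CC k)), ← map_pow (PowerSeries.C (R := CC k))]
  have hre : (PowerSeries.C (R := CC k)) ((alg k) (MvPolynomial.C (MvPolynomial.coeff μ P)))
        * (SS k ^ μ 0 * (PowerSeries.C (R := CC k)) (xb k ^ μ 1)
          * (PowerSeries.C (R := CC k)) (zb k ^ μ 2))
      = (PowerSeries.C (R := CC k)) ((alg k) (MvPolynomial.C (MvPolynomial.coeff μ P))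
          * xb k ^ μ 1 * zb k ^ μ 2) * SS k ^ μ 0 := by
    rw [map_mul, map_mul]
    ring
  rw [hre, PowerSeries.coeff_C_mul]

end Statement0Aux
namespace Statement0Aux

open MvPolynomial PowerSeries

variable (k : Type*) [Field k]

/-- Clearing denominators: `x^(N * c r)` times the `q`-th coefficient of `ev0 P` is the image
of an explicit polynomial. -/
lemma clear_coeff (r N q : ℕ) (hq : q ≤ N) (hN : N < aa (r + 1)) (P : R3 k) :
    xb k ^ (N * cc r) * PowerSeries.coeff (R := CC k) q (ev0 k P)
      = alg k (∑ μ ∈ P.support,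
          MvPolynomial.monomial
            (Finsupp.single (1 : Fin 3) (μ 1 + (N * cc r - μ 0 * cc r))
              + Finsupp.single (2 : Fin 3) (μ 2)) (MvPolynomial.coeff μ P)
          * iota k (GG k r (μ 0) q)) := by
  rw [coeff_ev0, Finset.mul_sum, map_sum]
  refine Finset.sum_congr rfl ?_
  intro μ _
  by_cases hd : μ 0 ≤ q
  · have hmul : μ 0 * cc r ≤ N * cc r := Nat.mul_le_mul_right _ (le_trans hd hq)
    have hsplit : N * cc r = (N * cc r - μ 0 * cc r) + μ 0 * cc r := by omega
    rw [map_mul, alg_monomial]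
    have hν0 : (Finsupp.single (1 : Fin 3) (μ 1 + (N * cc r - μ 0 * cc r))
        + Finsupp.single (2 : Fin 3) (μ 2)) 0 = 0 := by
      simp [Finsupp.single_apply]
    have hν1 : (Finsupp.single (1 : Fin 3) (μ 1 + (N * cc r - μ 0 * cc r))
        + Finsupp.single (2 : Fin 3) (μ 2)) 1 = μ 1 + (N * cc r - μ 0 * cc r) := by
      simp [Finsupp.single_apply]
    have hν2 : (Finsupp.single (1 : Fin 3) (μ 1 + (N * cc r - μ 0 * cc r))
        + Finsupp.single (2 : Fin 3) (μ 2)) 2 = μ 2 := by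
      simp [Finsupp.single_apply]
    rw [hν0, hν1, hν2]
    rw [← claim_eq k r (μ 0) q (by omega)]
    calc xb k ^ (N * cc r) * (alg k (MvPolynomial.C (MvPolynomial.coeff μ P))
          * xb k ^ μ 1 * zb k ^ μ 2 * PowerSeries.coeff (R := CC k) q (SS k ^ μ 0))
        = xb k ^ ((N * cc r - μ 0 * cc r) + μ 0 * cc r)
            * (alg k (MvPolynomial.C (MvPolynomial.coeff μ P))
              * xb k ^ μ 1 * zb k ^ μ 2 * PowerSeries.coeff (R := CC k) q (SS k ^ μ 0)) := by
          rw [← hsplit]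
      _ = alg k (MvPolynomial.C (MvPolynomial.coeff μ P)) * (wb k ^ 0
            * xb k ^ (μ 1 + (N * cc r - μ 0 * cc r)) * zb k ^ μ 2)
            * (xb k ^ (μ 0 * cc r) * PowerSeries.coeff (R := CC k) q (SS k ^ μ 0)) := by
          rw [pow_add, pow_add, pow_zero]
          ring
  · have h1 : PowerSeries.coeff (R := CC k) q (SS k ^ μ 0) = 0 :=
      coeff_SS_pow_eq_zero k (μ 0) q (by omega)
    have h2 : GG k r (μ 0) q = 0 := GG_eq_zero_of_lt k r (μ 0) q (by omega)
    rw [h1, h2]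
    simp

end Statement0Aux
namespace Statement0Aux

open MvPolynomial PowerSeries

variable (k : Type*) [Field k]

lemma pair_apply0 (a b : ℕ) :
    (Finsupp.single (1 : Fin 3) a + Finsupp.single (2 : Fin 3) b) 0 = 0 := by
  simp [Finsupp.single_apply]

lemma pair_apply1 (a b : ℕ) :
    (Finsupp.single (1 : Fin 3) a + Finsupp.single (2 : Fin 3) b) 1 = a := by
  simp [Finsupp.single_apply]

lemma pair_apply2 (a b : ℕ) :
    (Finsupp.single (1 : Fin 3) a + Finsupp.single (2 : Fin 3) b) 2 = b := by
  simp [Finsupp.single_apply]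

/-- Evaluation of a single term of the big cleared sum at the target monomial. -/
lemma term_eval (t : ℕ) (μ : Fin 3 →₀ ℕ) (r : ℕ) (hr : 1 ≤ r)
    (N : ℕ) (hNdef : N = t + μ 0 * aa r)
    (hC1 : N < aa (r + 1))
    (hC3 : μ 1 + N * cc (r - 1) < cc r)
    (hdN : μ 0 * cc r ≤ N * cc r)
    (p q : ℕ) (hpq : p + q = N) (hp : t ≤ p)
    (μ' : Fin 3 →₀ ℕ) (c : k) :
    MvPolynomial.coeff
      (Finsupp.single (1 : Fin 3) (μ 1 + (N * cc r - μ 0 * cc r))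
        + Finsupp.single (2 : Fin 3) (μ 2))
      (MvPolynomial.monomial
        (Finsupp.single (1 : Fin 3) (μ' 1 + (N * cc r - μ' 0 * cc r))
          + Finsupp.single (2 : Fin 3) (μ' 2)) c
        * iota k (GG k r (μ' 0) q))
      = if p = t ∧ μ' = μ then c else 0 := by
  by_cases hdes : p = t ∧ μ' = μ
  · obtain ⟨hpt, hμμ⟩ := hdes
    have hq' : q = μ 0 * aa r := by omega
    rw [if_pos ⟨hpt, hμμ⟩, hμμ]
    rw [MvPolynomial.coeff_monomial_mul', if_pos le_rfl, tsub_self, coeff_iota]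
    rw [if_pos (by simp)]
    have h0 : (0 : Fin 3 →₀ ℕ) 1 = 0 := rfl
    rw [h0, hq', claim_designated k r hr (μ 0) (by omega), mul_one]
  · rw [if_neg hdes]
    rw [MvPolynomial.coeff_monomial_mul']
    split_ifs with hle
    · rw [coeff_iota]
      split_ifs with hcond
      · by_cases hGG : (GG k r (μ' 0) q).coeff
            (((Finsupp.single (1 : Fin 3) (μ 1 + (N * cc r - μ 0 * cc r))
              + Finsupp.single (2 : Fin 3) (μ 2))
              - (Finsupp.single (1 : Fin 3) (μ' 1 + (N * cc r - μ' 0 * cc r))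
              + Finsupp.single (2 : Fin 3) (μ' 2))) 1) = 0
        · rw [hGG, mul_zero]
        · exfalso
          obtain ⟨k', T, hk, heq, hT, hcount⟩ :=
            claim_support k r hr (μ' 0) q (by omega) _ hGG
          -- extract componentwise information
          have hle1 : μ' 1 + (N * cc r - μ' 0 * cc r) ≤ μ 1 + (N * cc r - μ 0 * cc r) := by
            have := hle 1
            rwa [pair_apply1, pair_apply1] at this
          have hle2 : μ' 2 ≤ μ 2 := by
            have := hle 2
            rwa [pair_apply2, pair_apply2] at this
          have hcond2 := hcond.2
          rw [Finsupp.tsub_apply, pair_apply2, pair_apply2] at hcond2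
          have hj : μ' 2 = μ 2 := by omega
          set γ := ((Finsupp.single (1 : Fin 3) (μ 1 + (N * cc r - μ 0 * cc r))
              + Finsupp.single (2 : Fin 3) (μ 2))
              - (Finsupp.single (1 : Fin 3) (μ' 1 + (N * cc r - μ' 0 * cc r))
              + Finsupp.single (2 : Fin 3) (μ' 2))) 1 with hγdef
          have hγ : γ = (μ 1 + (N * cc r - μ 0 * cc r))
              - (μ' 1 + (N * cc r - μ' 0 * cc r)) := by
            rw [hγdef, Finsupp.tsub_apply, pair_apply1, pair_apply1]
          -- basic bounds
          have hkaa : k' ≤ k' * aa r := Nat.le_mul_of_pos_right k' (aa_pos r)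
          have hd'q : μ' 0 ≤ q := by omega
          have hqN : q ≤ N := by omega
          have hd'S : μ' 0 * cc r ≤ N * cc r := Nat.mul_le_mul_right _ (le_trans hd'q hqN)
          -- main linear relation
          have hmain : γ + μ' 1 + μ 0 * cc r = μ 1 + μ' 0 * cc r := by omega
          have hmain2 : μ' 1 + μ 0 * cc r = μ 1 + k' * cc r + T := by omega
          -- q is at most d * aa r
          have hq_le : q ≤ μ 0 * aa r := by omega
          have hkd : k' ≤ μ 0 := by
            refine Nat.le_of_mul_le_mul_right ?_ (aa_pos r)
            omega
          rcases eq_or_lt_of_le hkd with hk'' | hk''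
          · -- k' = μ 0 : forces the designated term
            subst hk''
            have hd'0 : μ' 0 = μ 0 := by omega
            rw [hd'0, tsub_self] at hT
            rw [hd'0] at heq
            simp only [zero_mul, Nat.le_zero] at hT
            subst hT
            have hγ0 : γ = 0 := by omega
            have hα : μ' 1 = μ 1 := by
              rw [hd'0] at hmain
              omega
            have hpt : p = t := by omega
            apply hdes
            refine ⟨hpt, ?_⟩
            ext i
            fin_cases i
            · simpa using hd'0
            · simpa using hα
            · simpa using hj
          · -- k' < μ 0 : impossible by the growth condition
            have hmulk : (k' + 1) * cc r ≤ μ 0 * cc r := Nat.mul_le_mul_right _ (by omega)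
            have hexp : (k' + 1) * cc r = k' * cc r + cc r := by ring
            have hTbound : T ≤ N * cc (r - 1) := by
              refine le_trans hT (Nat.mul_le_mul_right _ ?_)
              omega
            omega
      · rw [mul_zero]
    · rfl

end Statement0Aux
namespace Statement0Aux

open MvPolynomial PowerSeries

variable (k : Type*) [Field k]

/-- The key lemma: `Φ ∘ φ` is injective. -/
lemma phi_comp_inj (g : PowerSeries (R3 k))
    (hg : Phi k (PowerSeries.map (alg k) g) = 0) : g = 0 := by
  have key : ∀ t : ℕ, (∀ p, p < t → PowerSeries.coeff (R := R3 k) p g = 0) →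
      PowerSeries.coeff (R := R3 k) t g = 0 := by
    intro t IH
    apply MvPolynomial.ext
    intro μ
    rw [MvPolynomial.coeff_zero]
    -- set up all the parameters
    set r : ℕ := t + μ 0 + μ 1 + 3 with hrdef
    have hr1 : 1 ≤ r := by omega
    set N : ℕ := t + μ 0 * aa r with hNdef
    have hC1 : N < aa (r + 1) := growth1 t (μ 0) r (by omega) (by omega) (by omega)
    have hC3 : μ 1 + N * cc (r - 1) < cc r :=
      growth2 t (μ 0) (μ 1) r (by omega) (by omega) (by omega) (by omega)
    have htN : t ≤ N := by
      have := Nat.le_mul_of_pos_right (μ 0) (aa_pos r)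
      omega
    have hdN : μ 0 * cc r ≤ N * cc r := by
      refine Nat.mul_le_mul_right _ ?_
      have := Nat.le_mul_of_pos_right (μ 0) (aa_pos r)
      omega
    -- the vanishing coefficient of Φ(φ g)
    have E0 : (0 : CC k) = ∑ pq ∈ Finset.HasAntidiagonal.antidiagonal N,
        PowerSeries.coeff (R := CC k) pq.2 (ev0 k (PowerSeries.coeff (R := R3 k) pq.1 g)) := by
      have h1 : PowerSeries.coeff (R := CC k) N (Phi k (PowerSeries.map (alg k) g)) = 0 := by
        rw [hg, map_zero]
      rw [Phi, coeff_extHom] at h1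
      rw [← h1]
      refine Finset.sum_congr rfl ?_
      intro pq _
      rw [PowerSeries.coeff_map, evC_alg]
    -- clear denominators
    have E2 : alg k (∑ pq ∈ Finset.HasAntidiagonal.antidiagonal N,
        ∑ μ' ∈ (PowerSeries.coeff (R := R3 k) pq.1 g).support,
          MvPolynomial.monomial
            (Finsupp.single (1 : Fin 3) (μ' 1 + (N * cc r - μ' 0 * cc r))
              + Finsupp.single (2 : Fin 3) (μ' 2))
            (MvPolynomial.coeff μ' (PowerSeries.coeff (R := R3 k) pq.1 g))
          * iota k (GG k r (μ' 0) pq.2)) = 0 := by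
      rw [map_sum]
      have : ∀ pq ∈ Finset.HasAntidiagonal.antidiagonal N,
          alg k (∑ μ' ∈ (PowerSeries.coeff (R := R3 k) pq.1 g).support,
            MvPolynomial.monomial
              (Finsupp.single (1 : Fin 3) (μ' 1 + (N * cc r - μ' 0 * cc r))
                + Finsupp.single (2 : Fin 3) (μ' 2))
              (MvPolynomial.coeff μ' (PowerSeries.coeff (R := R3 k) pq.1 g))
            * iota k (GG k r (μ' 0) pq.2))
          = xb k ^ (N * cc r)
            * PowerSeries.coeff (R := CC k) pq.2 (ev0 k (PowerSeries.coeff (R := R3 k) pq.1 g)) := by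
        intro pq hpq
        have hq : pq.2 ≤ N := by
          have := Finset.HasAntidiagonal.mem_antidiagonal.mp hpq
          omega
        rw [clear_coeff k r N pq.2 hq hC1]
      rw [Finset.sum_congr rfl this, ← Finset.mul_sum, ← E0, mul_zero]
    have E3 := alg_inj k (E2.trans (map_zero (alg k)).symm)
    -- extract the coefficient at the target monomial
    have E4 := congrArg (MvPolynomial.coeff
      (Finsupp.single (1 : Fin 3) (μ 1 + (N * cc r - μ 0 * cc r))
        + Finsupp.single (2 : Fin 3) (μ 2))) E3
    rw [MvPolynomial.coeff_zero, MvPolynomial.coeff_sum] at E4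
    -- evaluate all the terms
    have E5 : ∀ pq ∈ Finset.HasAntidiagonal.antidiagonal N,
        (MvPolynomial.coeff
          (Finsupp.single (1 : Fin 3) (μ 1 + (N * cc r - μ 0 * cc r))
            + Finsupp.single (2 : Fin 3) (μ 2))
          (∑ μ' ∈ (PowerSeries.coeff (R := R3 k) pq.1 g).support,
            MvPolynomial.monomial
              (Finsupp.single (1 : Fin 3) (μ' 1 + (N * cc r - μ' 0 * cc r))
                + Finsupp.single (2 : Fin 3) (μ' 2))
              (MvPolynomial.coeff μ' (PowerSeries.coeff (R := R3 k) pq.1 g))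
            * iota k (GG k r (μ' 0) pq.2)))
        = if pq.1 = t then MvPolynomial.coeff μ (PowerSeries.coeff (R := R3 k) t g) else 0 := by
      rintro ⟨p, q⟩ hpq
      have hpqN : p + q = N := Finset.HasAntidiagonal.mem_antidiagonal.mp hpq
      by_cases hpt : p < t
      · rw [IH p hpt]
        simp only [MvPolynomial.support_zero, Finset.sum_empty, MvPolynomial.coeff_zero]
        rw [if_neg (by omega)]
      · push_neg at hpt
        rw [MvPolynomial.coeff_sum]
        have hterm : ∀ μ' ∈ (PowerSeries.coeff (R := R3 k) p g).support,
            MvPolynomial.coeff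
              (Finsupp.single (1 : Fin 3) (μ 1 + (N * cc r - μ 0 * cc r))
                + Finsupp.single (2 : Fin 3) (μ 2))
              (MvPolynomial.monomial
                (Finsupp.single (1 : Fin 3) (μ' 1 + (N * cc r - μ' 0 * cc r))
                  + Finsupp.single (2 : Fin 3) (μ' 2))
                (MvPolynomial.coeff μ' (PowerSeries.coeff (R := R3 k) p g))
              * iota k (GG k r (μ' 0) q))
            = if p = t ∧ μ' = μ
                then MvPolynomial.coeff μ' (PowerSeries.coeff (R := R3 k) p g) else 0 :=
          fun μ' _ => term_eval k t μ r hr1 N hNdef hC1 hC3 hdN p q hpqN hpt μ' _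
        rw [Finset.sum_congr rfl hterm]
        by_cases hp : p = t
        · subst hp
          rw [if_pos rfl]
          simp only [true_and]
          by_cases hμ : μ ∈ (PowerSeries.coeff (R := R3 k) p g).support
          · rw [Finset.sum_ite_eq' _ μ, if_pos hμ]
          · rw [Finset.sum_ite_eq' _ μ, if_neg hμ,
              MvPolynomial.notMem_support_iff.mp hμ]
        · rw [if_neg hp]
          refine Finset.sum_eq_zero ?_
          intro μ' _
          rw [if_neg]
          rintro ⟨h1, -⟩
          exact hp h1
    rw [Finset.sum_congr rfl E5] at E4
    -- the outer sum has a single nonzero term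
    rw [Finset.sum_eq_single (t, N - t)] at E4
    · rwa [if_pos rfl] at E4
    · rintro ⟨p, q⟩ hpq hne
      have hpqN : p + q = N := Finset.HasAntidiagonal.mem_antidiagonal.mp hpq
      rw [if_neg]
      intro hp
      apply hne
      have hp' : p = t := hp
      have hq' : q = N - t := by omega
      rw [hp', hq']
    · intro hnot
      exact absurd (Finset.HasAntidiagonal.mem_antidiagonal.mpr (by omega)) hnot
  -- strong induction
  have hall : ∀ n, PowerSeries.coeff (R := R3 k) n g = 0 := by
    intro n
    induction n using Nat.strong_induction_on with
    | _ n ih => exact key n ih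
  ext n
  rw [hall n, map_zero]

end Statement0Aux
/-- There is a nonzero prime ideal of `B = k[w,x,1/x,z][[y]]` contracting to `(0)` in
`A = k[w,x,z][[y]]`. -/
theorem statement0 (k : Type*) [Field k] :
    ∃ p : Ideal (B k), p.IsPrime ∧ p ≠ ⊥ ∧ p.comap (φ k) = ⊥ := by
  refine ⟨RingHom.ker (Statement0Aux.Phi k), RingHom.ker_isPrime _, ?_, ?_⟩
  · intro h
    have hmem : Statement0Aux.wB k - Statement0Aux.SS k ∈ RingHom.ker (Statement0Aux.Phi k) :=
      RingHom.mem_ker.mpr (Statement0Aux.Phi_witness k)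
    rw [h] at hmem
    exact Statement0Aux.witness_ne_zero k (Ideal.mem_bot.mp hmem)
  · refine eq_bot_iff.mpr ?_
    intro g hgmem
    have h0 : Statement0Aux.Phi k (PowerSeries.map (Statement0Aux.alg k) g) = 0 :=
      RingHom.mem_ker.mp hgmem
    exact Ideal.mem_bot.mpr (Statement0Aux.phi_comp_inj k g h0)
end

section
/- Let k be a field, A := k[w,x,z][[y]], B := k[w,x,1/x,z][[y]], φ : A → B the coefficientwise localization map, and P the ideal of A generated by the constant power series w and z. The extended ideal PB = P.map φ is a prime ideal of B. -/
/-- The ideal `P = (w, z)` of `A`, generated by the constant power series `w` and `z`. -/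
noncomputable def P (k : Type*) [Field k] : Ideal (A k) :=
  Ideal.span {PowerSeries.C (R := MvPolynomial (Fin 3) k) (MvPolynomial.X 0),
    PowerSeries.C (R := MvPolynomial (Fin 3) k) (MvPolynomial.X 2)}

open MvPolynomial in
/-- The evaluation killing `w` and `z`. -/
noncomputable def ev (k : Type*) [Field k] :
    MvPolynomial (Fin 3) k →ₐ[k] MvPolynomial (Fin 3) k :=
  aeval ![0, X 1, 0]

open MvPolynomial in
lemma sub_ev_mem (k : Type*) [Field k] (f : MvPolynomial (Fin 3) k) :
    f - ev k f ∈ Ideal.span ({X 0, X 2} : Set (MvPolynomial (Fin 3) k)) := by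
  induction f using MvPolynomial.induction_on with
  | C a => simp [ev]
  | add p q hp hq =>
      have : p + q - ev k (p + q) = (p - ev k p) + (q - ev k q) := by
        rw [map_add]; ring
      rw [this]; exact Ideal.add_mem _ hp hq
  | mul_X p i hp =>
      fin_cases i
      · show p * X 0 - ev k (p * X 0) ∈ _
        have : ev k (p * X 0) = 0 := by simp [ev]
        rw [this, sub_zero]
        exact Ideal.mul_mem_left _ _ (Ideal.subset_span (by simp))
      · show p * X 1 - ev k (p * X 1) ∈ _
        have : p * X 1 - ev k (p * X 1) = (p - ev k p) * X 1 := by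
          rw [map_mul]
          have : ev k (X 1 : MvPolynomial (Fin 3) k) = X 1 := by simp [ev]
          rw [this]; ring
        rw [this]
        exact Ideal.mul_mem_right _ _ hp
      · show p * X 2 - ev k (p * X 2) ∈ _
        have : ev k (p * X 2) = 0 := by simp [ev]
        rw [this, sub_zero]
        exact Ideal.mul_mem_left _ _ (Ideal.subset_span (by simp))

open MvPolynomial in
lemma ev_eq_zero_of_mem (k : Type*) [Field k] (f : MvPolynomial (Fin 3) k)
    (hf : f ∈ Ideal.span ({X 0, X 2} : Set (MvPolynomial (Fin 3) k))) : ev k f = 0 := by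
  obtain ⟨u, v, huv⟩ := Ideal.mem_span_pair.mp hf
  have h0 : ev k (X 0 : MvPolynomial (Fin 3) k) = 0 := by simp [ev]
  have h2 : ev k (X 2 : MvPolynomial (Fin 3) k) = 0 := by simp [ev]
  rw [← huv, map_add, map_mul, map_mul, h0, h2, mul_zero, mul_zero, add_zero]

open MvPolynomial in
lemma span_eq_ker (k : Type*) [Field k] :
    Ideal.span ({X 0, X 2} : Set (MvPolynomial (Fin 3) k)) = RingHom.ker (ev k).toRingHom := by
  ext f
  constructor
  · intro hf
    simpa [RingHom.mem_ker] using ev_eq_zero_of_mem k f hf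
  · intro hf
    have h : ev k f = 0 := hf
    have := sub_ev_mem k f
    rwa [h, sub_zero] at this

open MvPolynomial in
lemma span_isPrime (k : Type*) [Field k] :
    (Ideal.span ({X 0, X 2} : Set (MvPolynomial (Fin 3) k))).IsPrime := by
  rw [span_eq_ker]
  exact RingHom.ker_isPrime _

open MvPolynomial in
lemma span_disjoint (k : Type*) [Field k] :
    Disjoint ((Submonoid.powers (X 1 : MvPolynomial (Fin 3) k)) : Set (MvPolynomial (Fin 3) k))
      (Ideal.span ({X 0, X 2} : Set (MvPolynomial (Fin 3) k)) : Set (MvPolynomial (Fin 3) k)) := by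
  rw [Set.disjoint_left]
  rintro a ⟨n, rfl⟩ ha
  have h := ev_eq_zero_of_mem k _ ha
  have h1 : ev k ((X 1 : MvPolynomial (Fin 3) k) ^ n) = X 1 ^ n := by
    rw [map_pow]; simp [ev]
  have h' : ev k ((X 1 : MvPolynomial (Fin 3) k) ^ n) = 0 := h
  rw [h1] at h'
  exact pow_ne_zero n (X_ne_zero (R := k) (1 : Fin 3)) h'

set_option maxHeartbeats 1000000 in
open MvPolynomial in
lemma ker_prime_aux (k : Type*) [Field k]
    (J : Ideal (Localization.Away (X 1 : MvPolynomial (Fin 3) k))) [J.IsPrime] :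
    (RingHom.ker (PowerSeries.map (Ideal.Quotient.mk J) :
      B k →+* PowerSeries (Localization.Away (X 1 : MvPolynomial (Fin 3) k) ⧸ J))).IsPrime :=
  RingHom.ker_isPrime
    (S := PowerSeries (Localization.Away (X 1 : MvPolynomial (Fin 3) k) ⧸ J)) _

set_option maxHeartbeats 1000000 in
/-- The extended ideal `PB = P.map φ` is a prime ideal of `B = k[w,x,1/x,z][[y]]`. -/
theorem statement3 (k : Type*) [Field k] : ((P k).map (φ k)).IsPrime := by
  classical
  set R := MvPolynomial (Fin 3) k
  set S := Localization.Away (MvPolynomial.X 1 : R)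
  set J : Ideal S := (Ideal.span ({MvPolynomial.X 0, MvPolynomial.X 2} : Set R)).map
    (algebraMap R S) with hJ
  have hJprime : J.IsPrime :=
    IsLocalization.isPrime_of_isPrime_disjoint (Submonoid.powers (MvPolynomial.X 1 : R)) S _
      (span_isPrime k) (span_disjoint k)
  haveI := hJprime
  -- the quotient map on power series
  set Q : B k →+* PowerSeries (S ⧸ J) := PowerSeries.map (Ideal.Quotient.mk J) with hQ
  have hmem : ∀ a : R, a ∈ Ideal.span ({MvPolynomial.X 0, MvPolynomial.X 2} : Set R) →
      algebraMap R S a ∈ J := fun a ha => Ideal.mem_map_of_mem _ ha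
  have key : (P k).map (φ k) = RingHom.ker Q := by
    have hPmap : (P k).map (φ k) = Ideal.span
        {PowerSeries.C (R := S) (algebraMap R S (MvPolynomial.X 0)),
         PowerSeries.C (R := S) (algebraMap R S (MvPolynomial.X 2))} := by
      rw [P, Ideal.map_span, Set.image_insert_eq, Set.image_singleton]
      simp only [φ, PowerSeries.map_C]
      rfl
    rw [hPmap]
    apply le_antisymm
    · rw [Ideal.span_le]
      rintro b (rfl | rfl) <;>
      · simp only [SetLike.mem_coe, RingHom.mem_ker, hQ, PowerSeries.map_C]
        rw [Ideal.Quotient.eq_zero_iff_mem.mpr (hmem _ (Ideal.subset_span (by simp)))]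
        exact map_zero _
    · intro f hf
      have hcoeff : ∀ n, PowerSeries.coeff (R := S) n f ∈ J := by
        intro n
        have h0 : Q f = 0 := hf
        have := congrArg (PowerSeries.coeff (R := S ⧸ J) n) h0
        rw [hQ, PowerSeries.coeff_map, map_zero] at this
        exact Ideal.Quotient.eq_zero_iff_mem.mp this
      have hchoice : ∀ n, ∃ u v : S, u * algebraMap R S (MvPolynomial.X 0)
          + v * algebraMap R S (MvPolynomial.X 2) = PowerSeries.coeff (R := S) n f := by
        intro n
        have := hcoeff n
        rw [hJ, Ideal.map_span, Set.image_insert_eq, Set.image_singleton] at this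
        exact Ideal.mem_span_pair.mp this
      choose u v huv using hchoice
      rw [Ideal.mem_span_pair]
      refine ⟨PowerSeries.mk u, PowerSeries.mk v, ?_⟩
      ext n
      simp only [map_add, PowerSeries.coeff_mul_C, PowerSeries.coeff_mk]
      exact huv n
  rw [key, hQ]
  exact ker_prime_aux k J
end

section
/- Let k be a field, A := k[w,x,z][[y]], and P the prime ideal of A generated by the constant power series w and z, with R := A_P. The residue field of the local ring R is isomorphic as a field to the fraction field of k[x][[y]], the power series ring in y over the one-variable polynomial ring k[x]. -/
noncomputable def gHom (k : Type*) [Field k] : MvPolynomial (Fin 3) k →+* Polynomial k :=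
  (MvPolynomial.aeval (fun i : Fin 3 => if i = 1 then Polynomial.X else 0)).toRingHom

noncomputable def hHom (k : Type*) [Field k] : Polynomial k →+* MvPolynomial (Fin 3) k :=
  (Polynomial.aeval (MvPolynomial.X 1 : MvPolynomial (Fin 3) k)).toRingHom

lemma g_comp_h (k : Type*) [Field k] : (gHom k).comp (hHom k) = RingHom.id _ := by
  apply Polynomial.ringHom_ext <;> simp [gHom, hHom]

lemma sub_h_g_mem (k : Type*) [Field k] (p : MvPolynomial (Fin 3) k) :
    p - hHom k (gHom k p) ∈ Ideal.span ({MvPolynomial.X 0, MvPolynomial.X 2} :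
      Set (MvPolynomial (Fin 3) k)) := by
  induction p using MvPolynomial.induction_on with
  | C a => simp [gHom, hHom]
  | add p q hp hq =>
      rw [map_add, map_add, add_sub_add_comm]
      exact Ideal.add_mem _ hp hq
  | mul_X p i hp =>
      rw [map_mul, map_mul]
      by_cases hi : i = 1
      · subst hi
        simp only [gHom, hHom, AlgHom.toRingHom_eq_coe, RingHom.coe_coe, MvPolynomial.aeval_X,
          eq_self_iff_true, if_true, Polynomial.aeval_X]
        rw [← sub_mul]
        exact Ideal.mul_mem_right _ _ hp
      · have hx : (MvPolynomial.X i : MvPolynomial (Fin 3) k) ∈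
            Ideal.span ({MvPolynomial.X 0, MvPolynomial.X 2} :
              Set (MvPolynomial (Fin 3) k)) := by
          fin_cases i
          · exact Ideal.subset_span (by simp)
          · simp at hi
          · exact Ideal.subset_span (by simp)
        simp only [gHom, hHom, AlgHom.toRingHom_eq_coe, RingHom.coe_coe, MvPolynomial.aeval_X,
          if_neg hi, map_zero, mul_zero, sub_zero]
        exact Ideal.mul_mem_left _ _ hx

lemma ker_g (k : Type*) [Field k] :
    RingHom.ker (gHom k) = Ideal.span ({MvPolynomial.X 0, MvPolynomial.X 2} :
      Set (MvPolynomial (Fin 3) k)) := by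
  apply le_antisymm
  · intro p hp
    have h2 := sub_h_g_mem k p
    rw [RingHom.mem_ker] at hp
    rwa [hp, map_zero, sub_zero] at h2
  · rw [Ideal.span_le]
    rintro q hq
    simp only [Set.mem_insert_iff, Set.mem_singleton_iff] at hq
    rcases hq with rfl | rfl <;>
      simp [gHom, SetLike.mem_coe, RingHom.mem_ker]

noncomputable def ψR (k : Type*) [Field k] : A k →+* PowerSeries (Polynomial k) :=
  PowerSeries.map (gHom k)

lemma ψ_surj (k : Type*) [Field k] : Function.Surjective (ψR k) := by
  intro f
  refine ⟨PowerSeries.map (hHom k) f, ?_⟩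
  have : PowerSeries.map ((gHom k).comp (hHom k)) f = f := by
    rw [g_comp_h, PowerSeries.map_id, id_eq]
  rw [PowerSeries.map_comp] at this
  exact this

lemma ker_ψ (k : Type*) [Field k] : RingHom.ker (ψR k) = P k := by
  apply le_antisymm
  · intro f hf
    rw [RingHom.mem_ker] at hf
    have hc : ∀ n, (PowerSeries.coeff n f) ∈
        Ideal.span ({MvPolynomial.X 0, MvPolynomial.X 2} :
          Set (MvPolynomial (Fin 3) k)) := by
      intro n
      rw [← ker_g, RingHom.mem_ker]
      have hf' : PowerSeries.map (gHom k) f = 0 := hf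
      have := PowerSeries.coeff_map (f := gHom k) n f
      rw [hf', map_zero] at this
      exact this.symm
    choose a b hab using fun n => Ideal.mem_span_pair.mp (hc n)
    rw [P, Ideal.mem_span_pair]
    refine ⟨PowerSeries.mk a, PowerSeries.mk b, ?_⟩
    refine PowerSeries.ext fun n => ?_
    simp only [map_add, PowerSeries.coeff_mul_C, PowerSeries.coeff_mk]
    exact hab n
  · rw [P, Ideal.span_le]
    rintro q hq
    simp only [Set.mem_insert_iff, Set.mem_singleton_iff] at hq
    rcases hq with rfl | rfl <;>
      · rw [SetLike.mem_coe, RingHom.mem_ker, ψR, PowerSeries.map_C]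
        simp [gHom]

/-- The residue field of `R = A_P` is isomorphic to the fraction field of `k[x][[y]]`. -/
theorem statement8 (k : Type*) [Field k] [hP : (P k).IsPrime] :
    Nonempty (IsLocalRing.ResidueField (Localization.AtPrime (P k)) ≃+*
      FractionRing (PowerSeries (Polynomial k))) := by
  classical
  set F := FractionRing (PowerSeries (Polynomial k)) with hF
  set χ : A k →+* F := (algebraMap (PowerSeries (Polynomial k)) F).comp (ψR k) with hχ
  have hinj : Function.Injective (algebraMap (PowerSeries (Polynomial k)) F) :=
    IsFractionRing.injective _ _
  have hkerχ : RingHom.ker χ = P k := by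
    rw [← ker_ψ k]
    ext a
    simp only [RingHom.mem_ker, RingHom.comp_apply, hχ]
    exact ⟨fun h => hinj (h.trans (map_zero _).symm), fun h => by rw [h, map_zero]⟩
  have hunit : ∀ s : (P k).primeCompl, IsUnit (χ s) := by
    rintro ⟨s, hs⟩
    refine isUnit_iff_ne_zero.mpr fun h => hs ?_
    rw [← hkerχ]
    exact RingHom.mem_ker.mpr h
  set χ' : Localization.AtPrime (P k) →+* F := IsLocalization.lift hunit with hχ'
  have hcomp : ∀ a : A k, χ' (algebraMap (A k) (Localization.AtPrime (P k)) a) = χ a :=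
    fun a => IsLocalization.lift_eq hunit a
  have hmk : ∀ (x : A k) (s : (P k).primeCompl),
      χ x = χ s * χ' (IsLocalization.mk' (Localization.AtPrime (P k)) x s) := by
    intro x s
    exact (IsLocalization.lift_mk'_spec _ _ _ _).mp rfl
  have hlocal : IsLocalHom χ' := by
    constructor
    intro r hr
    obtain ⟨⟨x, s⟩, rfl⟩ := IsLocalization.mk'_surjective (P k).primeCompl r
    dsimp only at hr ⊢
    rw [IsLocalization.AtPrime.isUnit_mk'_iff]
    intro hx
    have hx0 : χ x = 0 := RingHom.mem_ker.mp (hkerχ ▸ hx)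
    have hs0 : χ s ≠ 0 := fun h => by
      have := hunit s
      rw [h] at this
      exact not_isUnit_zero this
    have : χ' (IsLocalization.mk' (Localization.AtPrime (P k)) x s) = 0 := by
      have h1 := hmk x s
      rw [hx0] at h1
      rcases mul_eq_zero.mp h1.symm with h | h
      · exact absurd h hs0
      · exact h
    rw [this] at hr
    exact not_isUnit_zero hr
  have hχ'surj : Function.Surjective χ' := by
    intro q
    obtain ⟨a, b, hb, hq⟩ := IsFractionRing.div_surjective (A := PowerSeries (Polynomial k)) q
    obtain ⟨α, rfl⟩ := ψ_surj k a
    obtain ⟨β, rfl⟩ := ψ_surj k b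
    have hβP : β ∉ P k := by
      intro hβ
      have h0 : ψR k β = 0 := RingHom.mem_ker.mp ((ker_ψ k) ▸ hβ)
      rw [h0] at hb
      exact zero_notMem_nonZeroDivisors hb
    refine ⟨IsLocalization.mk' (Localization.AtPrime (P k)) α
      (⟨β, hβP⟩ : (P k).primeCompl), ?_⟩
    have h1 := hmk α ⟨β, hβP⟩
    have hs0 : χ β ≠ 0 := fun h => not_isUnit_zero (h ▸ hunit ⟨β, hβP⟩)
    rw [← hq, eq_comm, div_eq_iff (fun h => hs0 (by exact h))]
    show χ α = χ' (IsLocalization.mk' (Localization.AtPrime (P k)) α ⟨β, hβP⟩) * χ β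
    rw [h1]
    ring
  haveI := hlocal
  set θ := IsLocalRing.ResidueField.lift χ' with hθ
  have hθsurj : Function.Surjective θ := by
    intro q
    obtain ⟨r, rfl⟩ := hχ'surj q
    exact ⟨IsLocalRing.residue _ r, IsLocalRing.ResidueField.lift_residue_apply χ' r⟩
  exact ⟨RingEquiv.ofBijective θ ⟨θ.injective, hθsurj⟩⟩
end

section
/- Let k be a field, A := k[w,x,z][[y]], B := k[w,x,1/x,z][[y]], φ : A → B the coefficientwise localization map, P the prime ideal of A generated by the constant power series w and z, and S := B_{PB} with PB = P.map φ. If q is a nonzero prime ideal of S whose contraction to R := A_P along the canonical local homomorphism R → S is the zero ideal, then the contraction p := q ∩ B of q along the localization map B → S is a prime ideal of B, p is nonzero, and the contraction of p to A along φ is the zero ideal. -/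
set_option maxHeartbeats 1000000 in
/-- If `q` is a nonzero prime of `S = B_{PB}` contracting to `(0)` in `R = A_P`, then
`p = q ∩ B` is a nonzero prime ideal of `B` contracting to `(0)` in `A` along `φ`. -/
theorem statement13 (k : Type*) [Field k] [hP : (P k).IsPrime]
    [hPB : ((P k).map (φ k)).IsPrime]
    (hIJ : P k = ((P k).map (φ k)).comap (φ k))
    (q : Ideal (Localization.AtPrime ((P k).map (φ k)))) (hq : q.IsPrime) (hq0 : q ≠ ⊥)
    (hcon : q.comap (Localization.localRingHom (P k) ((P k).map (φ k)) (φ k) hIJ) = ⊥) :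
    (q.comap (algebraMap (B k) (Localization.AtPrime ((P k).map (φ k))))).IsPrime ∧
    q.comap (algebraMap (B k) (Localization.AtPrime ((P k).map (φ k)))) ≠ ⊥ ∧
    (q.comap (algebraMap (B k) (Localization.AtPrime ((P k).map (φ k))))).comap (φ k) = ⊥ := by
  refine ⟨Ideal.comap_isPrime _ q, ?_, ?_⟩
  · intro h
    apply hq0
    have hmc := IsLocalization.map_comap ((P k).map (φ k)).primeCompl
      (Localization.AtPrime ((P k).map (φ k))) q
    rw [← hmc, show Ideal.under (B k) q = ⊥ from h, Ideal.map_bot]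
  · ext a
    simp only [Ideal.mem_comap, Ideal.mem_bot]
    constructor
    · intro ha
      have h1 : algebraMap (A k) (Localization.AtPrime (P k)) a ∈
          q.comap (Localization.localRingHom (P k) ((P k).map (φ k)) (φ k) hIJ) := by
        rw [Ideal.mem_comap, Localization.localRingHom_to_map]
        exact ha
      rw [hcon, Ideal.mem_bot] at h1
      have hinj : Function.Injective (algebraMap (A k) (Localization.AtPrime (P k))) :=
        IsLocalization.injective (M := (P k).primeCompl) (Localization.AtPrime (P k))
          (P k).primeCompl_le_nonZeroDivisors
      exact hinj (by rw [h1, map_zero])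
    · rintro rfl
      rw [map_zero, map_zero]
      exact q.zero_mem
end
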